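/- The homomorphism φ maps SL(2,ℂ) onto SO⁺(1,3): for every real 4×4 matrix S with Sᵀ · η · S = η, det S = 1 and S₀₀ > 0, there exists U ∈ SL(2,ℂ) with φ(U) = S. (Surjectivity part of the covering assertion of Theorem 5.3.) -/

import Mathlib

open Matrix Complex

/-- The Minkowski metric matrix `diag(1, -1, -1, -1)`. -/
noncomputable def minkEta : Matrix (Fin 4) (Fin 4) ℝ := Matrix.diagonal ![1, -1, -1, -1]

/-- The map `h : ℝ⁴ → (2×2 complex matrices)`,
`h(w) = [[w⁰+w³, w¹−i·w²],[w¹+i·w², w⁰−w³]]`. -/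
noncomputable def hMat (v : Fin 4 → ℝ) : Matrix (Fin 2) (Fin 2) ℂ :=
  !![(v 0 : ℂ) + (v 3 : ℂ), (v 1 : ℂ) - Complex.I * (v 2 : ℂ);
     (v 1 : ℂ) + Complex.I * (v 2 : ℂ), (v 0 : ℂ) - (v 3 : ℂ)]

/-- The map `w` taking a 2×2 complex matrix `A` to the 4-tuple
`((A₁₁+A₂₂)/2, (A₁₂+A₂₁)/2, (i·A₁₂ − i·A₂₁)/2, (A₁₁−A₂₂)/2)`. -/
noncomputable def wComp (A : Matrix (Fin 2) (Fin 2) ℂ) : Fin 4 → ℂ :=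
  ![(A 0 0 + A 1 1) / 2, (A 0 1 + A 1 0) / 2,
    (Complex.I * A 0 1 - Complex.I * A 1 0) / 2, (A 0 0 - A 1 1) / 2]

lemma minkEta_eq : minkEta = !![1,0,0,0; 0,-1,0,0; 0,0,-1,0; 0,0,0,-1] := by
  ext i j
  fin_cases i <;> fin_cases j <;>
    simp [minkEta, Matrix.diagonal_apply, Matrix.vecHead, Matrix.vecTail]

lemma det4 (A : Matrix (Fin 4) (Fin 4) ℝ) : A.det =
    A 0 0 * (A 1 1*(A 2 2*A 3 3 - A 2 3*A 3 2) - A 1 2*(A 2 1*A 3 3 - A 2 3*A 3 1) + A 1 3*(A 2 1*A 3 2 - A 2 2*A 3 1))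
  - A 0 1 * (A 1 0*(A 2 2*A 3 3 - A 2 3*A 3 2) - A 1 2*(A 2 0*A 3 3 - A 2 3*A 3 0) + A 1 3*(A 2 0*A 3 2 - A 2 2*A 3 0))
  + A 0 2 * (A 1 0*(A 2 1*A 3 3 - A 2 3*A 3 1) - A 1 1*(A 2 0*A 3 3 - A 2 3*A 3 0) + A 1 3*(A 2 0*A 3 1 - A 2 1*A 3 0))
  - A 0 3 * (A 1 0*(A 2 1*A 3 2 - A 2 2*A 3 1) - A 1 1*(A 2 0*A 3 2 - A 2 2*A 3 0) + A 1 2*(A 2 0*A 3 1 - A 2 1*A 3 0)) := by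
  have e1 : (Fin.succ 2 : Fin 4) = 3 := by decide
  have e2 : Fin.succAbove (2 : Fin 4) 2 = 3 := by decide
  have e3 : Fin.succAbove (1 : Fin 4) 2 = 3 := by decide
  have e4 : (Fin.castSucc 2 : Fin 4) = 2 := by decide
  have e5 : Fin.succAbove (3 : Fin 4) 2 = 2 := by decide
  rw [Matrix.det_succ_row_zero]
  simp [Fin.sum_univ_succ, Matrix.det_fin_three, Matrix.submatrix_apply, e1, e2, e3, e4, e5]
  ring

lemma etaSq : minkEta * minkEta = 1 := by
  rw [minkEta_eq]
  ext i j
  fin_cases i <;> fin_cases j <;>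
    simp [Matrix.mul_apply, Fin.sum_univ_four, Matrix.vecHead, Matrix.vecTail]

lemma lorentz_flip (A : Matrix (Fin 4) (Fin 4) ℝ) (h : Aᵀ * minkEta * A = minkEta) :
    A * minkEta * Aᵀ = minkEta := by
  have h1 : (minkEta * Aᵀ * minkEta) * A = 1 := by
    calc (minkEta * Aᵀ * minkEta) * A = minkEta * (Aᵀ * minkEta * A) := by
          simp only [Matrix.mul_assoc]
      _ = minkEta * minkEta := by rw [h]
      _ = 1 := etaSq
  have h2 : A * (minkEta * Aᵀ * minkEta) = 1 := mul_eq_one_comm.mp h1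
  calc A * minkEta * Aᵀ = A * (minkEta * Aᵀ * minkEta) * minkEta := by
        simp only [Matrix.mul_assoc, etaSq, Matrix.mul_one]
    _ = 1 * minkEta := by rw [h2]
    _ = minkEta := by rw [Matrix.one_mul]

lemma lorentz_entry (A : Matrix (Fin 4) (Fin 4) ℝ) (h : Aᵀ * minkEta * A = minkEta) (i j : Fin 4) :
    A 0 i * A 0 j - A 1 i * A 1 j - A 2 i * A 2 j - A 3 i * A 3 j = minkEta i j := by
  have e := congrFun (congrFun h i) j
  rw [← e, minkEta_eq]
  simp [Matrix.mul_apply, Fin.sum_univ_four, Matrix.transpose_apply]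
  ring

lemma lorentz_entry_row (A : Matrix (Fin 4) (Fin 4) ℝ) (h : A * minkEta * Aᵀ = minkEta) (i j : Fin 4) :
    A i 0 * A j 0 - A i 1 * A j 1 - A i 2 * A j 2 - A i 3 * A j 3 = minkEta i j := by
  have e := congrFun (congrFun h i) j
  rw [← e, minkEta_eq]
  simp [Matrix.mul_apply, Fin.sum_univ_four, Matrix.transpose_apply]
  ring

set_option maxHeartbeats 2000000 in
set_option maxRecDepth 100000 in
lemma rotCore (r1 r2 r3 r4 r5 r6 r7 r8 r9 : ℝ) (hr11 : r1*r1 + r2*r2 + r3*r3 = 1) (hr12 : r1*r4 + r2*r5 + r3*r6 = 0) (hr13 : r1*r7 + r2*r8 + r3*r9 = 0) (hr22 : r4*r4 + r5*r5 + r6*r6 = 1) (hr23 : r4*r7 + r5*r8 + r6*r9 = 0) (hr33 : r7*r7 + r8*r8 + r9*r9 = 1) (hc11 : r1*r1 + r4*r4 + r7*r7 = 1) (hc12 : r1*r2 + r4*r5 + r7*r8 = 0) (hc13 : r1*r3 + r4*r6 + r7*r9 = 0) (hc22 : r2*r2 + r5*r5 + r8*r8 = 1) (hc23 : r2*r3 +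 r5*r6 + r8*r9 = 0) (hc33 : r3*r3 + r6*r6 + r9*r9 = 1) (ha11 : r5*r9 - r6*r8 = r1) (ha12 : -(r2*r9) + r3*r8 = r4) (ha13 : r2*r6 - r3*r5 = r7) (ha21 : -(r4*r9) + r6*r7 = r2) (ha22 : r1*r9 - r3*r7 = r5) (ha23 : -(r1*r6) + r3*r4 = r8) (ha31 : r4*r8 - r5*r7 = r3) (ha32 : -(r1*r8) + r2*r7 = r6) (ha33 : r1*r5 - r2*r4 = r9) (hd3 : r1*(r5*r9 - r6*r8) + r2*(-(r4*r9) + r6*r7) + r3*(r4*r8 - r5*r7) = 1)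
    (htau : 0 < 1 + r1 + r5 + r9) :
    ∃ U : Matrix (Fin 2) (Fin 2) ℂ, U.det = 1 ∧ ∀ v : Fin 4 → ℝ,
      U * hMat v * Uᴴ = hMat ![v 0, r1 * v 1 + r2 * v 2 + r3 * v 3, r4 * v 1 + r5 * v 2 + r6 * v 3, r7 * v 1 + r8 * v 2 + r9 * v 3] := by
  have hr11C : (r1:ℂ)*(r1:ℂ) + (r2:ℂ)*(r2:ℂ) + (r3:ℂ)*(r3:ℂ) = 1 := by exact_mod_cast hr11
  have hr12C : (r1:ℂ)*(r4:ℂ) + (r2:ℂ)*(r5:ℂ) + (r3:ℂ)*(r6:ℂ) = 0 := by exact_mod_cast hr12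
  have hr13C : (r1:ℂ)*(r7:ℂ) + (r2:ℂ)*(r8:ℂ) + (r3:ℂ)*(r9:ℂ) = 0 := by exact_mod_cast hr13
  have hr22C : (r4:ℂ)*(r4:ℂ) + (r5:ℂ)*(r5:ℂ) + (r6:ℂ)*(r6:ℂ) = 1 := by exact_mod_cast hr22
  have hr23C : (r4:ℂ)*(r7:ℂ) + (r5:ℂ)*(r8:ℂ) + (r6:ℂ)*(r9:ℂ) = 0 := by exact_mod_cast hr23
  have hr33C : (r7:ℂ)*(r7:ℂ) + (r8:ℂ)*(r8:ℂ) + (r9:ℂ)*(r9:ℂ) = 1 := by exact_mod_cast hr33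
  have hc11C : (r1:ℂ)*(r1:ℂ) + (r4:ℂ)*(r4:ℂ) + (r7:ℂ)*(r7:ℂ) = 1 := by exact_mod_cast hc11
  have hc12C : (r1:ℂ)*(r2:ℂ) + (r4:ℂ)*(r5:ℂ) + (r7:ℂ)*(r8:ℂ) = 0 := by exact_mod_cast hc12
  have hc13C : (r1:ℂ)*(r3:ℂ) + (r4:ℂ)*(r6:ℂ) + (r7:ℂ)*(r9:ℂ) = 0 := by exact_mod_cast hc13
  have hc22C : (r2:ℂ)*(r2:ℂ) + (r5:ℂ)*(r5:ℂ) + (r8:ℂ)*(r8:ℂ) = 1 := by exact_mod_cast hc22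
  have hc23C : (r2:ℂ)*(r3:ℂ) + (r5:ℂ)*(r6:ℂ) + (r8:ℂ)*(r9:ℂ) = 0 := by exact_mod_cast hc23
  have hc33C : (r3:ℂ)*(r3:ℂ) + (r6:ℂ)*(r6:ℂ) + (r9:ℂ)*(r9:ℂ) = 1 := by exact_mod_cast hc33
  have ha11C : (r5:ℂ)*(r9:ℂ) - (r6:ℂ)*(r8:ℂ) = (r1:ℂ) := by exact_mod_cast ha11
  have ha12C : -((r2:ℂ)*(r9:ℂ)) + (r3:ℂ)*(r8:ℂ) = (r4:ℂ) := by exact_mod_cast ha12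
  have ha13C : (r2:ℂ)*(r6:ℂ) - (r3:ℂ)*(r5:ℂ) = (r7:ℂ) := by exact_mod_cast ha13
  have ha21C : -((r4:ℂ)*(r9:ℂ)) + (r6:ℂ)*(r7:ℂ) = (r2:ℂ) := by exact_mod_cast ha21
  have ha22C : (r1:ℂ)*(r9:ℂ) - (r3:ℂ)*(r7:ℂ) = (r5:ℂ) := by exact_mod_cast ha22
  have ha23C : -((r1:ℂ)*(r6:ℂ)) + (r3:ℂ)*(r4:ℂ) = (r8:ℂ) := by exact_mod_cast ha23
  have ha31C : (r4:ℂ)*(r8:ℂ) - (r5:ℂ)*(r7:ℂ) = (r3:ℂ) := by exact_mod_cast ha31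
  have ha32C : -((r1:ℂ)*(r8:ℂ)) + (r2:ℂ)*(r7:ℂ) = (r6:ℂ) := by exact_mod_cast ha32
  have ha33C : (r1:ℂ)*(r5:ℂ) - (r2:ℂ)*(r4:ℂ) = (r9:ℂ) := by exact_mod_cast ha33
  have hd3C : (r1:ℂ)*((r5:ℂ)*(r9:ℂ) - (r6:ℂ)*(r8:ℂ)) + (r2:ℂ)*(-((r4:ℂ)*(r9:ℂ)) + (r6:ℂ)*(r7:ℂ)) + (r3:ℂ)*((r4:ℂ)*(r8:ℂ) - (r5:ℂ)*(r7:ℂ)) = 1 := by exact_mod_cast hd3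
  set A : Matrix (Fin 2) (Fin 2) ℂ := !![1 + (r1:ℂ) + (r5:ℂ) + (r9:ℂ) + Complex.I * ((r2:ℂ) - (r4:ℂ)), Complex.I * ((r6:ℂ) - (r8:ℂ)) + ((r7:ℂ) - (r3:ℂ)); Complex.I * ((r6:ℂ) - (r8:ℂ)) - ((r7:ℂ) - (r3:ℂ)), 1 + (r1:ℂ) + (r5:ℂ) + (r9:ℂ) - Complex.I * ((r2:ℂ) - (r4:ℂ))] with hA
  have hdetA : A.det = 4 * (1 + (r1:ℂ) + (r5:ℂ) + (r9:ℂ)) := by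
    rw [hA, Matrix.det_fin_two_of]
    linear_combination (1 + 2*((r9 : ℝ) : ℂ) + 2*((r5 : ℝ) : ℂ)) * hr11C + ((-2)*((r2 : ℝ) : ℂ)) * hr12C + ((-2)*((r3 : ℝ) : ℂ)) * hr13C + (1 + 2*((r9 : ℝ) : ℂ)) * hr22C + ((-2)*((r8 : ℝ) : ℂ) + (-2)*((r6 : ℝ) : ℂ)) * hr23C + (1 + 2*((r5 : ℝ) : ℂ)) * hr33C + ((-2)*((r9 : ℝ) : ℂ) + (-2)*((r5 : ℝ) : ℂ)) * hc11C + (2*((r4 : ℝ) : ℂ)) * hc12C + (2*((r7 : ℝ) : ℂ)) * hc13C + (2 + (-2)*((r9 : ℝ) : ℂ) + (-2)*((r5 : ℝ) : ℂ)) * ha11C + (2*((r2 : ℝ) : ℂ)) * ha12C + (2*((r3 : ℝ) : ℂ)) * ha13C + ((-1)*((r8 : ℝ) : ℂ)*((r8 : ℝ) : ℂ) + 2*((r6 : ℝ) : ℂ)*((r8 : ℝ) : ℂ) + (-1)*((r6 : ℝ) : ℂ)*((r6 : ℝ) : ℂ) + (-1)*((r4 : ℝ) : ℂ)*((r4 :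 ℝ) : ℂ) + 2*((r2 : ℝ) : ℂ)*((r4 : ℝ) : ℂ) + (-1)*((r2 : ℝ) : ℂ)*((r2 : ℝ) : ℂ)) * Complex.I_sq
  have key : ∀ v : Fin 4 → ℝ, A * hMat v * Aᴴ
      = (4 * (1 + (r1:ℂ) + (r5:ℂ) + (r9:ℂ))) • hMat ![v 0, r1 * v 1 + r2 * v 2 + r3 * v 3, r4 * v 1 + r5 * v 2 + r6 * v 3, r7 * v 1 + r8 * v 2 + r9 * v 3] := by
    intro v
    ext i j
    fin_cases i <;> fin_cases j
    all_goals simp [hA, hMat, Matrix.mul_apply, Fin.sum_univ_two, Matrix.conjTranspose_apply, Matrix.smul_apply]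
    all_goals push_cast
    all_goals first | (linear_combination ((-1)*((v 3 : ℝ) : ℂ) + ((v 0 : ℝ) : ℂ)) * hr11C + ((-2)*((v 1 : ℝ) : ℂ)) * hr13C + ((-1)*((v 3 : ℝ) : ℂ) + ((v 0 : ℝ) : ℂ)) * hr22C + ((-2)*((v 2 : ℝ) : ℂ)) * hr23C + ((-3)*((v 3 : ℝ) : ℂ) + ((v 0 : ℝ) : ℂ)) * hr33C + (2*((v 3 : ℝ) : ℂ)) * hc11C + ((-2)*((v 1 : ℝ) : ℂ)) * hc13C + (2*((v 3 : ℝ) : ℂ)) * hc22C + ((-2)*((v 2 : ℝ) : ℂ)) * hc23C + ((-2)*((v 3 : ℝ) : ℂ) + 2*((v 0 : ℝ) : ℂ)) * ha11C + (2*((v 1 : ℝ) : ℂ)) * ha13C + ((-2)*((v 3 : ℝ) : ℂ) + 2*((v 0 : ℝ) : ℂ)) * ha22C + (2*((v 2 : ℝ) : ℂ)) * ha23C + (2*((v 1 : ℝ) : ℂ)) * ha31C + (2*((v 2 : ℝ) : ℂ)) * ha32C + (2*((v 3 : ℝ) : ℂ) + 2*((v 0 : ℝ) : ℂ)) * ha33C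 + ((-2)*((r8 : ℝ) : ℂ)*((v 2 : ℝ) : ℂ) + (-2)*((r8 : ℝ) : ℂ)*((r9 : ℝ) : ℂ)*((v 2 : ℝ) : ℂ) + ((r8 : ℝ) : ℂ)*((r8 : ℝ) : ℂ)*((v 3 : ℝ) : ℂ) + (-1)*((r8 : ℝ) : ℂ)*((r8 : ℝ) : ℂ)*((v 0 : ℝ) : ℂ) + 2*((r6 : ℝ) : ℂ)*((v 2 : ℝ) : ℂ) + 2*((r6 : ℝ) : ℂ)*((r9 : ℝ) : ℂ)*((v 2 : ℝ) : ℂ) + (-2)*((r6 : ℝ) : ℂ)*((r8 : ℝ) : ℂ)*((v 3 : ℝ) : ℂ) + 2*((r6 : ℝ) : ℂ)*((r8 : ℝ) : ℂ)*((v 0 : ℝ) : ℂ) + ((r6 : ℝ) : ℂ)*((r6 : ℝ) : ℂ)*((v 3 : ℝ) : ℂ) + (-1)*((r6 : ℝ) : ℂ)*((r6 : ℝ) : ℂ)*((v 0 : ℝ) : ℂ) + (-2)*((r5 : ℝ) : ℂ)*((r8 : ℝ) : ℂ)*((v 2 : ℝ) : ℂ) + 2*((r5 : ℝ) : ℂ)*((r6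 : ℝ) : ℂ)*((v 2 : ℝ) : ℂ) + (-2)*((r4 : ℝ) : ℂ)*((r8 : ℝ) : ℂ)*((v 1 : ℝ) : ℂ) + 2*((r4 : ℝ) : ℂ)*((r7 : ℝ) : ℂ)*((v 2 : ℝ) : ℂ) + 2*((r4 : ℝ) : ℂ)*((r6 : ℝ) : ℂ)*((v 1 : ℝ) : ℂ) + (-1)*((r4 : ℝ) : ℂ)*((r4 : ℝ) : ℂ)*((v 3 : ℝ) : ℂ) + (-1)*((r4 : ℝ) : ℂ)*((r4 : ℝ) : ℂ)*((v 0 : ℝ) : ℂ) + (-2)*((r3 : ℝ) : ℂ)*((r4 : ℝ) : ℂ)*((v 2 : ℝ) : ℂ) + 2*((r2 : ℝ) : ℂ)*((r8 : ℝ) : ℂ)*((v 1 : ℝ) : ℂ) + (-2)*((r2 : ℝ) : ℂ)*((r7 : ℝ) : ℂ)*((v 2 : ℝ) : ℂ) + (-2)*((r2 : ℝ) : ℂ)*((r6 : ℝ) : ℂ)*((v 1 : ℝ) : ℂ) + 2*((r2 : ℝ) : ℂ)*((r4 : ℝ) : ℂ)*((v 3 : ℝ) : ℂ) + 2*((r2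 : ℝ) : ℂ)*((r4 : ℝ) : ℂ)*((v 0 : ℝ) : ℂ) + 2*((r2 : ℝ) : ℂ)*((r3 : ℝ) : ℂ)*((v 2 : ℝ) : ℂ) + (-1)*((r2 : ℝ) : ℂ)*((r2 : ℝ) : ℂ)*((v 3 : ℝ) : ℂ) + (-1)*((r2 : ℝ) : ℂ)*((r2 : ℝ) : ℂ)*((v 0 : ℝ) : ℂ) + (-2)*((r1 : ℝ) : ℂ)*((r8 : ℝ) : ℂ)*((v 2 : ℝ) : ℂ) + 2*((r1 : ℝ) : ℂ)*((r6 : ℝ) : ℂ)*((v 2 : ℝ) : ℂ)) * Complex.I_sq) | (linear_combination ((-1)*((v 1 : ℝ) : ℂ) + Complex.I * ((-1)*((v 2 : ℝ) : ℂ))) * hr11C + ((-2)*((v 2 : ℝ) : ℂ) + Complex.I * (2*((v 1 : ℝ) : ℂ))) * hr12C + ((-2)*((v 3 : ℝ) : ℂ)) * hr13C + (((v 1 : ℝ) : ℂ) + Complex.I * (((v 2 : ℝ) : ℂ))) * hr22C + (Complex.I * (2*((v 3 : ℝ) : ℂ))) * hr23C + (((v 1 : ℝ) : ℂ) + Complex.I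 * ((-1)*((v 2 : ℝ) : ℂ))) * hr33C + ((-2)*((v 1 : ℝ) : ℂ)) * hc11C + ((-2)*((v 2 : ℝ) : ℂ) + Complex.I * (2*((v 1 : ℝ) : ℂ))) * hc12C + ((-2)*((v 3 : ℝ) : ℂ)) * hc13C + (Complex.I * (2*((v 2 : ℝ) : ℂ))) * hc22C + (Complex.I * (2*((v 3 : ℝ) : ℂ))) * hc23C + (2*((v 1 : ℝ) : ℂ) + Complex.I * (2*((v 2 : ℝ) : ℂ))) * ha11C + (2*((v 2 : ℝ) : ℂ) + Complex.I * ((-2)*((v 1 : ℝ) : ℂ))) * ha12C + (2*((v 3 : ℝ) : ℂ)) * ha13C + (2*((v 2 : ℝ) : ℂ) + Complex.I * ((-2)*((v 1 : ℝ) : ℂ))) * ha21C + ((-2)*((v 1 : ℝ) : ℂ) + Complex.I * ((-2)*((v 2 : ℝ) : ℂ))) * ha22C + (Complex.I * ((-2)*((v 3 : ℝ) : ℂ))) * ha23C + (2*((v 3 : ℝ) : ℂ)) * ha31C + (Complex.I * ((-2)*((v 3 : ℝ) : ℂ))) * ha32C + ((-2)*((v 1 : ℝ) : ℂ) + Complex.I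 * (2*((v 2 : ℝ) : ℂ))) * ha33C + ((-1)*((r8 : ℝ) : ℂ)*((r8 : ℝ) : ℂ)*((v 2 : ℝ) : ℂ)*Complex.I + (-1)*((r8 : ℝ) : ℂ)*((r8 : ℝ) : ℂ)*((v 1 : ℝ) : ℂ) + 2*((r7 : ℝ) : ℂ)*((r8 : ℝ) : ℂ)*((v 2 : ℝ) : ℂ) + 2*((r6 : ℝ) : ℂ)*((r8 : ℝ) : ℂ)*((v 2 : ℝ) : ℂ)*Complex.I + 2*((r6 : ℝ) : ℂ)*((r8 : ℝ) : ℂ)*((v 1 : ℝ) : ℂ) + (-2)*((r6 : ℝ) : ℂ)*((r7 : ℝ) : ℂ)*((v 2 : ℝ) : ℂ) + (-1)*((r6 : ℝ) : ℂ)*((r6 : ℝ) : ℂ)*((v 2 : ℝ) : ℂ)*Complex.I + (-1)*((r6 : ℝ) : ℂ)*((r6 : ℝ) : ℂ)*((v 1 : ℝ) : ℂ) + 2*((r4 : ℝ) : ℂ)*((v 2 : ℝ) : ℂ) + 2*((r4 : ℝ) : ℂ)*((r9 : ℝ) : ℂ)*((v 2 : ℝ) : ℂ) + (-2)*((r4 :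 ℝ) : ℂ)*((r8 : ℝ) : ℂ)*((v 3 : ℝ) : ℂ) + 2*((r4 : ℝ) : ℂ)*((r6 : ℝ) : ℂ)*((v 3 : ℝ) : ℂ) + 2*((r4 : ℝ) : ℂ)*((r5 : ℝ) : ℂ)*((v 2 : ℝ) : ℂ) + (-1)*((r4 : ℝ) : ℂ)*((r4 : ℝ) : ℂ)*((v 2 : ℝ) : ℂ)*Complex.I + ((r4 : ℝ) : ℂ)*((r4 : ℝ) : ℂ)*((v 1 : ℝ) : ℂ) + (-2)*((r3 : ℝ) : ℂ)*((r8 : ℝ) : ℂ)*((v 2 : ℝ) : ℂ) + 2*((r3 : ℝ) : ℂ)*((r6 : ℝ) : ℂ)*((v 2 : ℝ) : ℂ) + (-2)*((r2 : ℝ) : ℂ)*((v 2 : ℝ) : ℂ) + (-2)*((r2 : ℝ) : ℂ)*((r9 : ℝ) : ℂ)*((v 2 : ℝ) : ℂ) + 2*((r2 : ℝ) : ℂ)*((r8 : ℝ) : ℂ)*((v 3 : ℝ) : ℂ) + (-2)*((r2 : ℝ) : ℂ)*((r6 : ℝ) : ℂ)*((v 3 : ℝ) : ℂ) + (-2)*((r2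 : ℝ) : ℂ)*((r5 : ℝ) : ℂ)*((v 2 : ℝ) : ℂ) + 2*((r2 : ℝ) : ℂ)*((r4 : ℝ) : ℂ)*((v 2 : ℝ) : ℂ)*Complex.I + (-2)*((r2 : ℝ) : ℂ)*((r4 : ℝ) : ℂ)*((v 1 : ℝ) : ℂ) + (-1)*((r2 : ℝ) : ℂ)*((r2 : ℝ) : ℂ)*((v 2 : ℝ) : ℂ)*Complex.I + ((r2 : ℝ) : ℂ)*((r2 : ℝ) : ℂ)*((v 1 : ℝ) : ℂ) + 2*((r1 : ℝ) : ℂ)*((r4 : ℝ) : ℂ)*((v 2 : ℝ) : ℂ) + (-2)*((r1 : ℝ) : ℂ)*((r2 : ℝ) : ℂ)*((v 2 : ℝ) : ℂ)) * Complex.I_sq) | (linear_combination ((-1)*((v 1 : ℝ) : ℂ) + Complex.I * (((v 2 : ℝ) : ℂ))) * hr11C + ((-2)*((v 2 : ℝ) : ℂ) + Complex.I * ((-2)*((v 1 : ℝ) : ℂ))) * hr12C + ((-2)*((v 3 : ℝ) : ℂ)) * hr13C + (((v 1 : ℝ) : ℂ) + Complex.I * ((-1)*((v 2 : ℝ) :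 ℂ))) * hr22C + (Complex.I * ((-2)*((v 3 : ℝ) : ℂ))) * hr23C + (((v 1 : ℝ) : ℂ) + Complex.I * (((v 2 : ℝ) : ℂ))) * hr33C + ((-2)*((v 1 : ℝ) : ℂ)) * hc11C + ((-2)*((v 2 : ℝ) : ℂ) + Complex.I * ((-2)*((v 1 : ℝ) : ℂ))) * hc12C + ((-2)*((v 3 : ℝ) : ℂ)) * hc13C + (Complex.I * ((-2)*((v 2 : ℝ) : ℂ))) * hc22C + (Complex.I * ((-2)*((v 3 : ℝ) : ℂ))) * hc23C + (2*((v 1 : ℝ) : ℂ) + Complex.I * ((-2)*((v 2 : ℝ) : ℂ))) * ha11C + (2*((v 2 : ℝ) : ℂ) + Complex.I * (2*((v 1 : ℝ) : ℂ))) * ha12C + (2*((v 3 : ℝ) : ℂ)) * ha13C + (2*((v 2 : ℝ) : ℂ) + Complex.I * (2*((v 1 : ℝ) : ℂ))) * ha21C + ((-2)*((v 1 : ℝ) : ℂ) + Complex.I * (2*((v 2 : ℝ) : ℂ))) * ha22C + (Complex.I * (2*((v 3 : ℝ) : ℂ))) * ha23C + (2*((v 3 : ℝ) : ℂ)) * ha31C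 + (Complex.I * (2*((v 3 : ℝ) : ℂ))) * ha32C + ((-2)*((v 1 : ℝ) : ℂ) + Complex.I * ((-2)*((v 2 : ℝ) : ℂ))) * ha33C + (((r8 : ℝ) : ℂ)*((r8 : ℝ) : ℂ)*((v 2 : ℝ) : ℂ)*Complex.I + (-1)*((r8 : ℝ) : ℂ)*((r8 : ℝ) : ℂ)*((v 1 : ℝ) : ℂ) + 2*((r7 : ℝ) : ℂ)*((r8 : ℝ) : ℂ)*((v 2 : ℝ) : ℂ) + (-2)*((r6 : ℝ) : ℂ)*((r8 : ℝ) : ℂ)*((v 2 : ℝ) : ℂ)*Complex.I + 2*((r6 : ℝ) : ℂ)*((r8 : ℝ) : ℂ)*((v 1 : ℝ) : ℂ) + (-2)*((r6 : ℝ) : ℂ)*((r7 : ℝ) : ℂ)*((v 2 : ℝ) : ℂ) + ((r6 : ℝ) : ℂ)*((r6 : ℝ) : ℂ)*((v 2 : ℝ) : ℂ)*Complex.I + (-1)*((r6 : ℝ) : ℂ)*((r6 : ℝ) : ℂ)*((v 1 : ℝ) : ℂ) + 2*((r4 : ℝ) : ℂ)*((v 2 : ℝ) : ℂ) + 2*((r4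 : ℝ) : ℂ)*((r9 : ℝ) : ℂ)*((v 2 : ℝ) : ℂ) + (-2)*((r4 : ℝ) : ℂ)*((r8 : ℝ) : ℂ)*((v 3 : ℝ) : ℂ) + 2*((r4 : ℝ) : ℂ)*((r6 : ℝ) : ℂ)*((v 3 : ℝ) : ℂ) + 2*((r4 : ℝ) : ℂ)*((r5 : ℝ) : ℂ)*((v 2 : ℝ) : ℂ) + ((r4 : ℝ) : ℂ)*((r4 : ℝ) : ℂ)*((v 2 : ℝ) : ℂ)*Complex.I + ((r4 : ℝ) : ℂ)*((r4 : ℝ) : ℂ)*((v 1 : ℝ) : ℂ) + (-2)*((r3 : ℝ) : ℂ)*((r8 : ℝ) : ℂ)*((v 2 : ℝ) : ℂ) + 2*((r3 : ℝ) : ℂ)*((r6 : ℝ) : ℂ)*((v 2 : ℝ) : ℂ) + (-2)*((r2 : ℝ) : ℂ)*((v 2 : ℝ) : ℂ) + (-2)*((r2 : ℝ) : ℂ)*((r9 : ℝ) : ℂ)*((v 2 : ℝ) : ℂ) + 2*((r2 : ℝ) : ℂ)*((r8 : ℝ) : ℂ)*((v 3 : ℝ) : ℂ) + (-2)*((r2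 : ℝ) : ℂ)*((r6 : ℝ) : ℂ)*((v 3 : ℝ) : ℂ) + (-2)*((r2 : ℝ) : ℂ)*((r5 : ℝ) : ℂ)*((v 2 : ℝ) : ℂ) + (-2)*((r2 : ℝ) : ℂ)*((r4 : ℝ) : ℂ)*((v 2 : ℝ) : ℂ)*Complex.I + (-2)*((r2 : ℝ) : ℂ)*((r4 : ℝ) : ℂ)*((v 1 : ℝ) : ℂ) + ((r2 : ℝ) : ℂ)*((r2 : ℝ) : ℂ)*((v 2 : ℝ) : ℂ)*Complex.I + ((r2 : ℝ) : ℂ)*((r2 : ℝ) : ℂ)*((v 1 : ℝ) : ℂ) + 2*((r1 : ℝ) : ℂ)*((r4 : ℝ) : ℂ)*((v 2 : ℝ) : ℂ) + (-2)*((r1 : ℝ) : ℂ)*((r2 : ℝ) : ℂ)*((v 2 : ℝ) : ℂ)) * Complex.I_sq) | (linear_combination (((v 3 : ℝ) : ℂ) + ((v 0 : ℝ) : ℂ)) * hr11C + (2*((v 1 : ℝ) : ℂ)) * hr13C + (((v 3 : ℝ) : ℂ) + ((v 0 : ℝ) : ℂ)) * hr22C + (2*((v 2 : ℝ) : ℂ))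 * hr23C + (3*((v 3 : ℝ) : ℂ) + ((v 0 : ℝ) : ℂ)) * hr33C + ((-2)*((v 3 : ℝ) : ℂ)) * hc11C + (2*((v 1 : ℝ) : ℂ)) * hc13C + ((-2)*((v 3 : ℝ) : ℂ)) * hc22C + (2*((v 2 : ℝ) : ℂ)) * hc23C + (2*((v 3 : ℝ) : ℂ) + 2*((v 0 : ℝ) : ℂ)) * ha11C + ((-2)*((v 1 : ℝ) : ℂ)) * ha13C + (2*((v 3 : ℝ) : ℂ) + 2*((v 0 : ℝ) : ℂ)) * ha22C + ((-2)*((v 2 : ℝ) : ℂ)) * ha23C + ((-2)*((v 1 : ℝ) : ℂ)) * ha31C + ((-2)*((v 2 : ℝ) : ℂ)) * ha32C + ((-2)*((v 3 : ℝ) : ℂ) + 2*((v 0 : ℝ) : ℂ)) * ha33C + (2*((r8 : ℝ) : ℂ)*((v 2 : ℝ) : ℂ) + 2*((r8 : ℝ) : ℂ)*((r9 : ℝ) : ℂ)*((v 2 : ℝ) : ℂ) + (-1)*((r8 : ℝ) : ℂ)*((r8 : ℝ) : ℂ)*((v 3 : ℝ) : ℂ) + (-1)*((r8 : ℝ) :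 ℂ)*((r8 : ℝ) : ℂ)*((v 0 : ℝ) : ℂ) + (-2)*((r6 : ℝ) : ℂ)*((v 2 : ℝ) : ℂ) + (-2)*((r6 : ℝ) : ℂ)*((r9 : ℝ) : ℂ)*((v 2 : ℝ) : ℂ) + 2*((r6 : ℝ) : ℂ)*((r8 : ℝ) : ℂ)*((v 3 : ℝ) : ℂ) + 2*((r6 : ℝ) : ℂ)*((r8 : ℝ) : ℂ)*((v 0 : ℝ) : ℂ) + (-1)*((r6 : ℝ) : ℂ)*((r6 : ℝ) : ℂ)*((v 3 : ℝ) : ℂ) + (-1)*((r6 : ℝ) : ℂ)*((r6 : ℝ) : ℂ)*((v 0 : ℝ) : ℂ) + 2*((r5 : ℝ) : ℂ)*((r8 : ℝ) : ℂ)*((v 2 : ℝ) : ℂ) + (-2)*((r5 : ℝ) : ℂ)*((r6 : ℝ) : ℂ)*((v 2 : ℝ) : ℂ) + 2*((r4 : ℝ) : ℂ)*((r8 : ℝ) : ℂ)*((v 1 : ℝ) : ℂ) + (-2)*((r4 : ℝ) : ℂ)*((r7 : ℝ) : ℂ)*((v 2 : ℝ) : ℂ) + (-2)*((r4 : ℝ)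 : ℂ)*((r6 : ℝ) : ℂ)*((v 1 : ℝ) : ℂ) + ((r4 : ℝ) : ℂ)*((r4 : ℝ) : ℂ)*((v 3 : ℝ) : ℂ) + (-1)*((r4 : ℝ) : ℂ)*((r4 : ℝ) : ℂ)*((v 0 : ℝ) : ℂ) + 2*((r3 : ℝ) : ℂ)*((r4 : ℝ) : ℂ)*((v 2 : ℝ) : ℂ) + (-2)*((r2 : ℝ) : ℂ)*((r8 : ℝ) : ℂ)*((v 1 : ℝ) : ℂ) + 2*((r2 : ℝ) : ℂ)*((r7 : ℝ) : ℂ)*((v 2 : ℝ) : ℂ) + 2*((r2 : ℝ) : ℂ)*((r6 : ℝ) : ℂ)*((v 1 : ℝ) : ℂ) + (-2)*((r2 : ℝ) : ℂ)*((r4 : ℝ) : ℂ)*((v 3 : ℝ) : ℂ) + 2*((r2 : ℝ) : ℂ)*((r4 : ℝ) : ℂ)*((v 0 : ℝ) : ℂ) + (-2)*((r2 : ℝ) : ℂ)*((r3 : ℝ) : ℂ)*((v 2 : ℝ) : ℂ) + ((r2 : ℝ) : ℂ)*((r2 : ℝ) : ℂ)*((v 3 : ℝ) : ℂ) + (-1)*((r2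 : ℝ) : ℂ)*((r2 : ℝ) : ℂ)*((v 0 : ℝ) : ℂ) + 2*((r1 : ℝ) : ℂ)*((r8 : ℝ) : ℂ)*((v 2 : ℝ) : ℂ) + (-2)*((r1 : ℝ) : ℂ)*((r6 : ℝ) : ℂ)*((v 2 : ℝ) : ℂ)) * Complex.I_sq)
  have htau4 : (0:ℝ) < 4 * (1 + r1 + r5 + r9) := by linarith
  have hcsq : (Real.sqrt (4 * (1 + r1 + r5 + r9)))^2 = 4 * (1 + r1 + r5 + r9) :=
    Real.sq_sqrt htau4.le
  have hcpos : 0 < Real.sqrt (4 * (1 + r1 + r5 + r9)) := Real.sqrt_pos.mpr htau4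
  set cc : ℝ := Real.sqrt (4 * (1 + r1 + r5 + r9)) with hccdef
  have hcC : ((cc:ℝ):ℂ)^2 = 4 * (1 + (r1:ℂ) + (r5:ℂ) + (r9:ℂ)) := by
    exact_mod_cast hcsq
  have hcne : ((cc:ℝ):ℂ) ≠ 0 := by
    simpa using Complex.ofReal_ne_zero.mpr hcpos.ne'
  refine ⟨((cc:ℝ):ℂ)⁻¹ • A, ?_, ?_⟩
  · rw [Matrix.det_smul, hdetA, ← hcC]
    rw [Fintype.card_fin]; field_simp
  · intro v
    have hUH : (((cc:ℝ):ℂ)⁻¹ • A)ᴴ = ((cc:ℝ):ℂ)⁻¹ • Aᴴ := by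
      rw [Matrix.conjTranspose_smul]
      congr 1
      simp
    rw [hUH, Matrix.smul_mul, Matrix.smul_mul, Matrix.mul_smul, smul_smul, key v, smul_smul]
    rw [show ((cc:ℝ):ℂ)⁻¹ * ((cc:ℝ):ℂ)⁻¹ * (4 * (1 + (r1:ℂ) + (r5:ℂ) + (r9:ℂ))) = 1 from by
      rw [← hcC]; field_simp]
    rw [one_smul]

lemma flipE1 (x : Fin 4 → ℝ) :
    !![(0:ℂ), Complex.I; Complex.I, 0] * hMat x * !![(0:ℂ), Complex.I; Complex.I, 0]ᴴ = hMat ![x 0, x 1, -x 2, -x 3] := by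
  ext i j
  fin_cases i <;> fin_cases j
  all_goals simp [hMat, Matrix.mul_apply, Fin.sum_univ_two, Matrix.conjTranspose_apply]
  all_goals push_cast
  all_goals first | (linear_combination (((x 3 : ℝ) : ℂ) + (-1)*((x 0 : ℝ) : ℂ)) * Complex.I_sq) | (linear_combination ((-1)*((x 2 : ℝ) : ℂ)*Complex.I + (-1)*((x 1 : ℝ) : ℂ)) * Complex.I_sq) | (linear_combination (((x 2 : ℝ) : ℂ)*Complex.I + (-1)*((x 1 : ℝ) : ℂ)) * Complex.I_sq) | (linear_combination ((-1)*((x 3 : ℝ) : ℂ) + (-1)*((x 0 : ℝ) : ℂ)) * Complex.I_sq) | ring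

lemma flipE2 (x : Fin 4 → ℝ) :
    !![(0:ℂ), 1; -1, 0] * hMat x * !![(0:ℂ), 1; -1, 0]ᴴ = hMat ![x 0, -x 1, x 2, -x 3] := by
  ext i j
  fin_cases i <;> fin_cases j
  all_goals simp [hMat, Matrix.mul_apply, Fin.sum_univ_two, Matrix.conjTranspose_apply]
  all_goals push_cast
  all_goals first | ring

lemma flipE3 (x : Fin 4 → ℝ) :
    !![Complex.I, 0; 0, -Complex.I] * hMat x * !![Complex.I, 0; 0, -Complex.I]ᴴ = hMat ![x 0, -x 1, -x 2, x 3] := by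
  ext i j
  fin_cases i <;> fin_cases j
  all_goals simp [hMat, Matrix.mul_apply, Fin.sum_univ_two, Matrix.conjTranspose_apply]
  all_goals push_cast
  all_goals first | (linear_combination ((-1)*((x 3 : ℝ) : ℂ) + (-1)*((x 0 : ℝ) : ℂ)) * Complex.I_sq) | (linear_combination ((-1)*((x 2 : ℝ) : ℂ)*Complex.I + ((x 1 : ℝ) : ℂ)) * Complex.I_sq) | (linear_combination (((x 2 : ℝ) : ℂ)*Complex.I + ((x 1 : ℝ) : ℂ)) * Complex.I_sq) | (linear_combination (((x 3 : ℝ) : ℂ) + (-1)*((x 0 : ℝ) : ℂ)) * Complex.I_sq) | ring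

lemma rotFull (r1 r2 r3 r4 r5 r6 r7 r8 r9 : ℝ) (hr11 : r1*r1 + r2*r2 + r3*r3 = 1) (hr12 : r1*r4 + r2*r5 + r3*r6 = 0) (hr13 : r1*r7 + r2*r8 + r3*r9 = 0) (hr22 : r4*r4 + r5*r5 + r6*r6 = 1) (hr23 : r4*r7 + r5*r8 + r6*r9 = 0) (hr33 : r7*r7 + r8*r8 + r9*r9 = 1) (hc11 : r1*r1 + r4*r4 + r7*r7 = 1) (hc12 : r1*r2 + r4*r5 + r7*r8 = 0) (hc13 : r1*r3 + r4*r6 + r7*r9 = 0) (hc22 : r2*r2 + r5*r5 + r8*r8 = 1) (hc23 : r2*r3 + r5*r6 + r8*r9 = 0) (hc33 : r3*r3 + r6*r6 + r9*r9 = 1) (ha11 : r5*r9 - r6*r8 = r1) (ha12 : -(r2*r9) + r3*r8 = r4) (ha13 : r2*r6 - r3*r5 = r7) (ha21 : -(r4*r9) + r6*r7 = r2) (ha22 : r1*r9 - r3*r7 = r5) (ha23 : -(r1*r6) + r3*r4 = r8) (ha31 : r4*r8 - r5*r7 = r3) (ha32 : -(r1*r8) + r2*r7 = r6) (ha33 :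 r1*r5 - r2*r4 = r9) (hd3 : r1*(r5*r9 - r6*r8) + r2*(-(r4*r9) + r6*r7) + r3*(r4*r8 - r5*r7) = 1) :
    ∃ U : Matrix (Fin 2) (Fin 2) ℂ, U.det = 1 ∧ ∀ v : Fin 4 → ℝ,
      U * hMat v * Uᴴ = hMat ![v 0, r1 * v 1 + r2 * v 2 + r3 * v 3, r4 * v 1 + r5 * v 2 + r6 * v 3, r7 * v 1 + r8 * v 2 + r9 * v 3] := by
  have hsum : (1 + r1 + r5 + r9) + (1 + r1 - r5 - r9) + (1 - r1 + r5 - r9) + (1 - r1 - r5 + r9) = 4 := by ring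
  have hcases : 0 < 1 + r1 + r5 + r9 ∨ 0 < 1 + r1 - r5 - r9 ∨ 0 < 1 - r1 + r5 - r9 ∨ 0 < 1 - r1 - r5 + r9 := by
    by_contra hcon
    push_neg at hcon
    obtain ⟨a, b, c, d⟩ := hcon
    linarith
  rcases hcases with h | h | h | h
  · exact rotCore r1 r2 r3 r4 r5 r6 r7 r8 r9 hr11 hr12 hr13 hr22 hr23 hr33 hc11 hc12 hc13 hc22 hc23 hc33 ha11 ha12 ha13 ha21 ha22 ha23 ha31 ha32 ha33 hd3 h
  · obtain ⟨U, hU1, hU2⟩ := rotCore r1 r2 r3 (-r4) (-r5) (-r6) (-r7) (-r8) (-r9)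
      (by linear_combination hr11)
      (by linear_combination (-1) * hr12)
      (by linear_combination (-1) * hr13)
      (by linear_combination hr22)
      (by linear_combination hr23)
      (by linear_combination hr33)
      (by linear_combination hc11)
      (by linear_combination hc12)
      (by linear_combination hc13)
      (by linear_combination hc22)
      (by linear_combination hc23)
      (by linear_combination hr11 + hr22 + hr33 + (-1) * hc11 + (-1) * hc22)
      (by linear_combination ha11)
      (by linear_combination (-1) * ha12)
      (by linear_combination (-1) * ha13)
      (by linear_combination ha21)
      (by linear_combination (-1) * ha22)
      (by linear_combination (-1) * ha23)
      (by linear_combination ha31)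
      (by linear_combination (-1) * ha32)
      (by linear_combination (-1) * ha33)
      (by linear_combination hd3)
      h
    refine ⟨!![(0:ℂ), Complex.I; Complex.I, 0] * U, ?_, ?_⟩
    · rw [Matrix.det_mul, hU1, mul_one, Matrix.det_fin_two_of]
      linear_combination (-1 : ℂ) * Complex.I_sq
    · intro v
      calc !![(0:ℂ), Complex.I; Complex.I, 0] * U * hMat v * (!![(0:ℂ), Complex.I; Complex.I, 0] * U)ᴴ
          = !![(0:ℂ), Complex.I; Complex.I, 0] * (U * hMat v * Uᴴ) * !![(0:ℂ), Complex.I; Complex.I, 0]ᴴ := by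
            rw [Matrix.conjTranspose_mul]
            simp only [Matrix.mul_assoc]
        _ = !![(0:ℂ), Complex.I; Complex.I, 0] * hMat ![v 0, r1 * v 1 + r2 * v 2 + r3 * v 3, -r4 * v 1 + -r5 * v 2 + -r6 * v 3, -r7 * v 1 + -r8 * v 2 + -r9 * v 3] * !![(0:ℂ), Complex.I; Complex.I, 0]ᴴ := by rw [hU2 v]
        _ = hMat ![v 0, r1 * v 1 + r2 * v 2 + r3 * v 3, r4 * v 1 + r5 * v 2 + r6 * v 3, r7 * v 1 + r8 * v 2 + r9 * v 3] := by
            rw [flipE1 (![v 0, r1 * v 1 + r2 * v 2 + r3 * v 3, -r4 * v 1 + -r5 * v 2 + -r6 * v 3, -r7 * v 1 + -r8 * v 2 + -r9 * v 3])]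
            refine congrArg hMat ?_
            funext kk
            fin_cases kk <;> simp <;> ring_nf
  · obtain ⟨U, hU1, hU2⟩ := rotCore (-r1) (-r2) (-r3) r4 r5 r6 (-r7) (-r8) (-r9)
      (by linear_combination hr11)
      (by linear_combination (-1) * hr12)
      (by linear_combination hr13)
      (by linear_combination hr22)
      (by linear_combination (-1) * hr23)
      (by linear_combination hr33)
      (by linear_combination hc11)
      (by linear_combination hc12)
      (by linear_combination hc13)
      (by linear_combination hc22)
      (by linear_combination hc23)
      (by linear_combination hr11 + hr22 + hr33 + (-1) * hc11 + (-1) * hc22)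
      (by linear_combination (-1) * ha11)
      (by linear_combination ha12)
      (by linear_combination (-1) * ha13)
      (by linear_combination (-1) * ha21)
      (by linear_combination ha22)
      (by linear_combination (-1) * ha23)
      (by linear_combination (-1) * ha31)
      (by linear_combination ha32)
      (by linear_combination (-1) * ha33)
      (by linear_combination hd3)
      h
    refine ⟨!![(0:ℂ), 1; -1, 0] * U, ?_, ?_⟩
    · rw [Matrix.det_mul, hU1, mul_one, Matrix.det_fin_two_of]
      norm_num
    · intro v
      calc !![(0:ℂ), 1; -1, 0] * U * hMat v * (!![(0:ℂ), 1; -1, 0] * U)ᴴ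
          = !![(0:ℂ), 1; -1, 0] * (U * hMat v * Uᴴ) * !![(0:ℂ), 1; -1, 0]ᴴ := by
            rw [Matrix.conjTranspose_mul]
            simp only [Matrix.mul_assoc]
        _ = !![(0:ℂ), 1; -1, 0] * hMat ![v 0, -r1 * v 1 + -r2 * v 2 + -r3 * v 3, r4 * v 1 + r5 * v 2 + r6 * v 3, -r7 * v 1 + -r8 * v 2 + -r9 * v 3] * !![(0:ℂ), 1; -1, 0]ᴴ := by rw [hU2 v]
        _ = hMat ![v 0, r1 * v 1 + r2 * v 2 + r3 * v 3, r4 * v 1 + r5 * v 2 + r6 * v 3, r7 * v 1 + r8 * v 2 + r9 * v 3] := by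
            rw [flipE2 (![v 0, -r1 * v 1 + -r2 * v 2 + -r3 * v 3, r4 * v 1 + r5 * v 2 + r6 * v 3, -r7 * v 1 + -r8 * v 2 + -r9 * v 3])]
            refine congrArg hMat ?_
            funext kk
            fin_cases kk <;> simp <;> ring_nf
  · obtain ⟨U, hU1, hU2⟩ := rotCore (-r1) (-r2) (-r3) (-r4) (-r5) (-r6) r7 r8 r9
      (by linear_combination hr11)
      (by linear_combination hr12)
      (by linear_combination (-1) * hr13)
      (by linear_combination hr22)
      (by linear_combination (-1) * hr23)
      (by linear_combination hr33)
      (by linear_combination hc11)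
      (by linear_combination hc12)
      (by linear_combination hc13)
      (by linear_combination hc22)
      (by linear_combination hc23)
      (by linear_combination hr11 + hr22 + hr33 + (-1) * hc11 + (-1) * hc22)
      (by linear_combination (-1) * ha11)
      (by linear_combination (-1) * ha12)
      (by linear_combination ha13)
      (by linear_combination (-1) * ha21)
      (by linear_combination (-1) * ha22)
      (by linear_combination ha23)
      (by linear_combination (-1) * ha31)
      (by linear_combination (-1) * ha32)
      (by linear_combination ha33)
      (by linear_combination hd3)
      h
    refine ⟨!![Complex.I, 0; 0, -Complex.I] * U, ?_, ?_⟩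
    · rw [Matrix.det_mul, hU1, mul_one, Matrix.det_fin_two_of]
      linear_combination (-1 : ℂ) * Complex.I_sq
    · intro v
      calc !![Complex.I, 0; 0, -Complex.I] * U * hMat v * (!![Complex.I, 0; 0, -Complex.I] * U)ᴴ
          = !![Complex.I, 0; 0, -Complex.I] * (U * hMat v * Uᴴ) * !![Complex.I, 0; 0, -Complex.I]ᴴ := by
            rw [Matrix.conjTranspose_mul]
            simp only [Matrix.mul_assoc]
        _ = !![Complex.I, 0; 0, -Complex.I] * hMat ![v 0, -r1 * v 1 + -r2 * v 2 + -r3 * v 3, -r4 * v 1 + -r5 * v 2 + -r6 * v 3, r7 * v 1 + r8 * v 2 + r9 * v 3] * !![Complex.I, 0; 0, -Complex.I]ᴴ := by rw [hU2 v]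
        _ = hMat ![v 0, r1 * v 1 + r2 * v 2 + r3 * v 3, r4 * v 1 + r5 * v 2 + r6 * v 3, r7 * v 1 + r8 * v 2 + r9 * v 3] := by
            rw [flipE3 (![v 0, -r1 * v 1 + -r2 * v 2 + -r3 * v 3, -r4 * v 1 + -r5 * v 2 + -r6 * v 3, r7 * v 1 + r8 * v 2 + r9 * v 3])]
            refine congrArg hMat ?_
            funext kk
            fin_cases kk <;> simp <;> ring_nf
noncomputable def boostB (u0 u1 u2 u3 d : ℝ) : Matrix (Fin 4) (Fin 4) ℝ :=
  !![u0, -u1, -u2, -u3;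
     -u1, 1 + d*(u1*u1), d*(u1*u2), d*(u1*u3);
     -u2, d*(u2*u1), 1 + d*(u2*u2), d*(u2*u3);
     -u3, d*(u3*u1), d*(u3*u2), 1 + d*(u3*u3)]

noncomputable def boostN (u0 u1 u2 u3 : ℝ) : Matrix (Fin 2) (Fin 2) ℂ :=
  !![1 + (u0:ℂ) - (u3:ℂ), -(u1:ℂ) + Complex.I * (u2:ℂ);
     -(u1:ℂ) - Complex.I * (u2:ℂ), 1 + (u0:ℂ) + (u3:ℂ)]

noncomputable def boostP (u0 u1 u2 u3 : ℝ) : Matrix (Fin 2) (Fin 2) ℂ :=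
  !![1 + (u0:ℂ) + (u3:ℂ), (u1:ℂ) - Complex.I * (u2:ℂ);
     (u1:ℂ) + Complex.I * (u2:ℂ), 1 + (u0:ℂ) - (u3:ℂ)]

lemma boostN_herm (u0 u1 u2 u3 : ℝ) : (boostN u0 u1 u2 u3)ᴴ = boostN u0 u1 u2 u3 := by
  ext i j
  fin_cases i <;> fin_cases j
  all_goals simp [boostN, Matrix.conjTranspose_apply]
  all_goals ring


set_option maxHeartbeats 2000000 in
lemma boostB_lorentz (u0 u1 u2 u3 d : ℝ)
    (hQ : u0*u0 - u1*u1 - u2*u2 - u3*u3 = 1) (hd : d * (1 + u0) = 1) :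
    (boostB u0 u1 u2 u3 d)ᵀ * minkEta * boostB u0 u1 u2 u3 d = minkEta := by
  rw [minkEta_eq]
  ext i j
  fin_cases i <;> fin_cases j
  all_goals simp [boostB, Matrix.mul_apply, Fin.sum_univ_four, Matrix.transpose_apply,
    Matrix.vecHead, Matrix.vecTail]
  all_goals first | (linear_combination (1) * hQ) | (linear_combination ((-1)*(u1) + (u0)*(u1)) * hd + ((-1)*(u1)*(d)) * hQ) | (linear_combination ((-1)*(u2) + (u0)*(u2)) * hd + ((-1)*(u2)*(d)) * hQ) | (linear_combination ((-1)*(u3) + (u0)*(u3)) * hd + ((-1)*(u3)*(d)) * hQ) | (linear_combination ((-1)*(u1)*(u1) + (u1)*(u1)*(d) + (-1)*(u0)*(u1)*(u1)*(d)) * hd + ((u1)*(u1)*(d)*(d)) * hQ) | (linear_combination ((-1)*(u1)*(u2) + (u1)*(u2)*(d) + (-1)*(u0)*(u1)*(u2)*(d)) * hd + ((u1)*(u2)*(d)*(d)) * hQ) | (linear_combination ((-1)*(u1)*(u3) + (u1)*(u3)*(d) + (-1)*(u0)*(u1)*(u3)*(d)) * hd + ((u1)*(u3)*(d)*(d)) *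 hQ) | (linear_combination ((-1)*(u2)*(u2) + (u2)*(u2)*(d) + (-1)*(u0)*(u2)*(u2)*(d)) * hd + ((u2)*(u2)*(d)*(d)) * hQ) | (linear_combination ((-1)*(u2)*(u3) + (u2)*(u3)*(d) + (-1)*(u0)*(u2)*(u3)*(d)) * hd + ((u2)*(u3)*(d)*(d)) * hQ) | (linear_combination ((-1)*(u3)*(u3) + (u3)*(u3)*(d) + (-1)*(u0)*(u3)*(u3)*(d)) * hd + ((u3)*(u3)*(d)*(d)) * hQ)


set_option maxHeartbeats 1000000 in
lemma boostB_det (u0 u1 u2 u3 d : ℝ)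
    (hQ : u0*u0 - u1*u1 - u2*u2 - u3*u3 = 1) (hd : d * (1 + u0) = 1) :
    (boostB u0 u1 u2 u3 d).det = 1 := by
  rw [det4]
  simp [boostB, Matrix.vecHead, Matrix.vecTail]
  linear_combination (1 + (u3)*(u3) + (u2)*(u2) + (u1)*(u1) + (-1)*(u0)) * hd + ((d)) * hQ


set_option maxHeartbeats 2000000 in
lemma boostB_key (u0 u1 u2 u3 d : ℝ)
    (hQ : u0*u0 - u1*u1 - u2*u2 - u3*u3 = 1) (hd : d * (1 + u0) = 1) :
    ∀ x : Fin 4 → ℝ, ((2 + 2*u0 : ℝ) : ℂ) • hMat ((boostB u0 u1 u2 u3 d).mulVec x)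
      = boostN u0 u1 u2 u3 * hMat x * boostN u0 u1 u2 u3 := by
  have hQC : (u0:ℂ)*(u0:ℂ) - (u1:ℂ)*(u1:ℂ) - (u2:ℂ)*(u2:ℂ) - (u3:ℂ)*(u3:ℂ) = 1 := by exact_mod_cast hQ
  have hdC : (d:ℂ) * (1 + (u0:ℂ)) = 1 := by exact_mod_cast hd
  intro x
  ext i j
  fin_cases i <;> fin_cases j
  all_goals simp [boostB, boostN, hMat, Matrix.mulVec, dotProduct, Fin.sum_univ_four,
    Matrix.mul_apply, Fin.sum_univ_two, Matrix.smul_apply, Matrix.vecHead, Matrix.vecTail]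
  all_goals push_cast
  all_goals first | (linear_combination ((-1)*((x 3 : ℝ) : ℂ) + ((x 0 : ℝ) : ℂ) + ((u3 : ℝ) : ℂ)*((u3 : ℝ) : ℂ)*((x 3 : ℝ) : ℂ) + ((u3 : ℝ) : ℂ)*((u3 : ℝ) : ℂ)*((x 0 : ℝ) : ℂ) + 2*((u2 : ℝ) : ℂ)*((u3 : ℝ) : ℂ)*((x 2 : ℝ) : ℂ) + (-1)*((u2 : ℝ) : ℂ)*((u2 : ℝ) : ℂ)*((x 3 : ℝ) : ℂ) + ((u2 : ℝ) : ℂ)*((u2 : ℝ) : ℂ)*((x 0 : ℝ) : ℂ) + 2*((u1 : ℝ) : ℂ)*((u3 : ℝ) : ℂ)*((x 1 : ℝ) : ℂ) + (-1)*((u1 : ℝ) : ℂ)*((u1 : ℝ) : ℂ)*((x 3 : ℝ) : ℂ) + ((u1 : ℝ) : ℂ)*((u1 : ℝ) : ℂ)*((x 0 : ℝ) : ℂ) + ((u0 : ℝ) : ℂ)*((u0 : ℝ) : ℂ)*((x 3 : ℝ) : ℂ) + (-1)*((u0 : ℝ) : ℂ)*((u0 : ℝ) : ℂ)*((x 0 :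 ℝ) : ℂ)) * hdC + ((-1)*((d : ℝ) : ℂ)*((x 3 : ℝ) : ℂ) + ((d : ℝ) : ℂ)*((x 0 : ℝ) : ℂ) + (-1)*((u0 : ℝ) : ℂ)*((d : ℝ) : ℂ)*((x 3 : ℝ) : ℂ) + ((u0 : ℝ) : ℂ)*((d : ℝ) : ℂ)*((x 0 : ℝ) : ℂ)) * hQC + ((-2)*((u2 : ℝ) : ℂ)*((x 2 : ℝ) : ℂ) + 2*((u2 : ℝ) : ℂ)*((u3 : ℝ) : ℂ)*((x 2 : ℝ) : ℂ) + (-1)*((u2 : ℝ) : ℂ)*((u2 : ℝ) : ℂ)*((x 3 : ℝ) : ℂ) + ((u2 : ℝ) : ℂ)*((u2 : ℝ) : ℂ)*((x 0 : ℝ) : ℂ) + (-2)*((u0 : ℝ) : ℂ)*((u2 : ℝ) : ℂ)*((x 2 : ℝ) : ℂ)) * Complex.I_sq) | (linear_combination ((-1)*((x 1 : ℝ) : ℂ) + (-1)*((u3 : ℝ) : ℂ)*((u3 : ℝ) : ℂ)*((x 1 : ℝ) : ℂ) + (-1)*((u2 : ℝ) : ℂ)*((u2 : ℝ) : ℂ)*((x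 1 : ℝ) : ℂ) + 2*((u1 : ℝ) : ℂ)*((u3 : ℝ) : ℂ)*((x 3 : ℝ) : ℂ) + 2*((u1 : ℝ) : ℂ)*((u2 : ℝ) : ℂ)*((x 2 : ℝ) : ℂ) + ((u1 : ℝ) : ℂ)*((u1 : ℝ) : ℂ)*((x 1 : ℝ) : ℂ) + ((u0 : ℝ) : ℂ)*((u0 : ℝ) : ℂ)*((x 1 : ℝ) : ℂ) + Complex.I * (((x 2 : ℝ) : ℂ) + ((u3 : ℝ) : ℂ)*((u3 : ℝ) : ℂ)*((x 2 : ℝ) : ℂ) + (-2)*((u2 : ℝ) : ℂ)*((u3 : ℝ) : ℂ)*((x 3 : ℝ) : ℂ) + (-1)*((u2 : ℝ) : ℂ)*((u2 : ℝ) : ℂ)*((x 2 : ℝ) : ℂ) + (-2)*((u1 : ℝ) : ℂ)*((u2 : ℝ) : ℂ)*((x 1 : ℝ) : ℂ) + ((u1 : ℝ) : ℂ)*((u1 : ℝ) : ℂ)*((x 2 : ℝ) : ℂ) + (-1)*((u0 : ℝ) : ℂ)*((u0 : ℝ) : ℂ)*((x 2 : ℝ) : ℂ))) * hdC + ((-1)*((d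 : ℝ) : ℂ)*((x 1 : ℝ) : ℂ) + (-1)*((u0 : ℝ) : ℂ)*((d : ℝ) : ℂ)*((x 1 : ℝ) : ℂ) + Complex.I * (((d : ℝ) : ℂ)*((x 2 : ℝ) : ℂ) + ((u0 : ℝ) : ℂ)*((d : ℝ) : ℂ)*((x 2 : ℝ) : ℂ))) * hQC + ((-1)*((u2 : ℝ) : ℂ)*((u2 : ℝ) : ℂ)*((x 2 : ℝ) : ℂ)*Complex.I + (-1)*((u2 : ℝ) : ℂ)*((u2 : ℝ) : ℂ)*((x 1 : ℝ) : ℂ) + 2*((u1 : ℝ) : ℂ)*((u2 : ℝ) : ℂ)*((x 2 : ℝ) : ℂ)) * Complex.I_sq) | (linear_combination ((-1)*((x 1 : ℝ) : ℂ) + (-1)*((u3 : ℝ) : ℂ)*((u3 : ℝ) : ℂ)*((x 1 : ℝ) : ℂ) + (-1)*((u2 : ℝ) : ℂ)*((u2 : ℝ) : ℂ)*((x 1 : ℝ) : ℂ) + 2*((u1 : ℝ) : ℂ)*((u3 : ℝ) : ℂ)*((x 3 : ℝ) : ℂ) + 2*((u1 : ℝ) : ℂ)*((u2 : ℝ) :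 ℂ)*((x 2 : ℝ) : ℂ) + ((u1 : ℝ) : ℂ)*((u1 : ℝ) : ℂ)*((x 1 : ℝ) : ℂ) + ((u0 : ℝ) : ℂ)*((u0 : ℝ) : ℂ)*((x 1 : ℝ) : ℂ) + Complex.I * ((-1)*((x 2 : ℝ) : ℂ) + (-1)*((u3 : ℝ) : ℂ)*((u3 : ℝ) : ℂ)*((x 2 : ℝ) : ℂ) + 2*((u2 : ℝ) : ℂ)*((u3 : ℝ) : ℂ)*((x 3 : ℝ) : ℂ) + ((u2 : ℝ) : ℂ)*((u2 : ℝ) : ℂ)*((x 2 : ℝ) : ℂ) + 2*((u1 : ℝ) : ℂ)*((u2 : ℝ) : ℂ)*((x 1 : ℝ) : ℂ) + (-1)*((u1 : ℝ) : ℂ)*((u1 : ℝ) : ℂ)*((x 2 : ℝ) : ℂ) + ((u0 : ℝ) : ℂ)*((u0 : ℝ) : ℂ)*((x 2 : ℝ) : ℂ))) * hdC + ((-1)*((d : ℝ) : ℂ)*((x 1 : ℝ) : ℂ) + (-1)*((u0 : ℝ) : ℂ)*((d : ℝ) : ℂ)*((x 1 : ℝ) : ℂ) + Complex.I * ((-1)*((d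 : ℝ) : ℂ)*((x 2 : ℝ) : ℂ) + (-1)*((u0 : ℝ) : ℂ)*((d : ℝ) : ℂ)*((x 2 : ℝ) : ℂ))) * hQC + (((u2 : ℝ) : ℂ)*((u2 : ℝ) : ℂ)*((x 2 : ℝ) : ℂ)*Complex.I + (-1)*((u2 : ℝ) : ℂ)*((u2 : ℝ) : ℂ)*((x 1 : ℝ) : ℂ) + 2*((u1 : ℝ) : ℂ)*((u2 : ℝ) : ℂ)*((x 2 : ℝ) : ℂ)) * Complex.I_sq) | (linear_combination (((x 3 : ℝ) : ℂ) + ((x 0 : ℝ) : ℂ) + (-1)*((u3 : ℝ) : ℂ)*((u3 : ℝ) : ℂ)*((x 3 : ℝ) : ℂ) + ((u3 : ℝ) : ℂ)*((u3 : ℝ) : ℂ)*((x 0 : ℝ) : ℂ) + (-2)*((u2 : ℝ) : ℂ)*((u3 : ℝ) : ℂ)*((x 2 : ℝ) : ℂ) + ((u2 : ℝ) : ℂ)*((u2 : ℝ) : ℂ)*((x 3 : ℝ) : ℂ) + ((u2 : ℝ) : ℂ)*((u2 : ℝ) : ℂ)*((x 0 : ℝ) : ℂ) + (-2)*((u1 :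 ℝ) : ℂ)*((u3 : ℝ) : ℂ)*((x 1 : ℝ) : ℂ) + ((u1 : ℝ) : ℂ)*((u1 : ℝ) : ℂ)*((x 3 : ℝ) : ℂ) + ((u1 : ℝ) : ℂ)*((u1 : ℝ) : ℂ)*((x 0 : ℝ) : ℂ) + (-1)*((u0 : ℝ) : ℂ)*((u0 : ℝ) : ℂ)*((x 3 : ℝ) : ℂ) + (-1)*((u0 : ℝ) : ℂ)*((u0 : ℝ) : ℂ)*((x 0 : ℝ) : ℂ)) * hdC + (((d : ℝ) : ℂ)*((x 3 : ℝ) : ℂ) + ((d : ℝ) : ℂ)*((x 0 : ℝ) : ℂ) + ((u0 : ℝ) : ℂ)*((d : ℝ) : ℂ)*((x 3 : ℝ) : ℂ) + ((u0 : ℝ) : ℂ)*((d : ℝ) : ℂ)*((x 0 : ℝ) : ℂ)) * hQC + ((-2)*((u2 : ℝ) : ℂ)*((x 2 : ℝ) : ℂ) + (-2)*((u2 : ℝ) : ℂ)*((u3 : ℝ) : ℂ)*((x 2 : ℝ) : ℂ) + ((u2 : ℝ) : ℂ)*((u2 : ℝ) : ℂ)*((x 3 : ℝ) : ℂ) + ((u2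 : ℝ) : ℂ)*((u2 : ℝ) : ℂ)*((x 0 : ℝ) : ℂ) + (-2)*((u0 : ℝ) : ℂ)*((u2 : ℝ) : ℂ)*((x 2 : ℝ) : ℂ)) * Complex.I_sq)


lemma boostPN (u0 u1 u2 u3 : ℝ)
    (hQ : u0*u0 - u1*u1 - u2*u2 - u3*u3 = 1) :
    boostP u0 u1 u2 u3 * boostN u0 u1 u2 u3 = ((2 + 2*u0 : ℝ) : ℂ) • 1 := by
  have hQC : (u0:ℂ)*(u0:ℂ) - (u1:ℂ)*(u1:ℂ) - (u2:ℂ)*(u2:ℂ) - (u3:ℂ)*(u3:ℂ) = 1 := by exact_mod_cast hQ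
  ext i j
  fin_cases i <;> fin_cases j
  all_goals simp [boostP, boostN, Matrix.mul_apply, Fin.sum_univ_two, Matrix.smul_apply,
    Matrix.one_apply]
  all_goals push_cast
  all_goals first | (linear_combination (1) * hQC + (((u2 : ℝ) : ℂ)*((u2 : ℝ) : ℂ)) * Complex.I_sq) | (ring) | ring


lemma boostP_det (u0 u1 u2 u3 : ℝ)
    (hQ : u0*u0 - u1*u1 - u2*u2 - u3*u3 = 1) :
    (boostP u0 u1 u2 u3).det = ((2 + 2*u0 : ℝ) : ℂ) := by
  have hQC : (u0:ℂ)*(u0:ℂ) - (u1:ℂ)*(u1:ℂ) - (u2:ℂ)*(u2:ℂ) - (u3:ℂ)*(u3:ℂ) = 1 := by exact_mod_cast hQ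
  rw [boostP, Matrix.det_fin_two_of]
  push_cast
  linear_combination (1) * hQC + (((u2 : ℝ) : ℂ)*((u2 : ℝ) : ℂ)) * Complex.I_sq


set_option maxHeartbeats 2000000 in
theorem phi_surjective
    (S : Matrix (Fin 4) (Fin 4) ℝ)
    (hL : Sᵀ * minkEta * S = minkEta) (hdet : S.det = 1) (hpos : 0 < S 0 0) :
    ∃ U : Matrix (Fin 2) (Fin 2) ℂ, U.det = 1 ∧
      ∀ v : Fin 4 → ℝ, hMat (S.mulVec v) = U * hMat v * Uᴴ := by
  have hQ : S 0 0*S 0 0 - S 1 0*S 1 0 - S 2 0*S 2 0 - S 3 0*S 3 0 = 1 := by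
    have e := lorentz_entry S hL 0 0
    rw [minkEta_eq] at e
    simp at e
    linear_combination e
  have h1u : (0:ℝ) < 1 + S 0 0 := by linarith
  set d : ℝ := (1 + S 0 0)⁻¹ with hddef
  have hd : d * (1 + S 0 0) = 1 := inv_mul_cancel₀ h1u.ne'
  set R : Matrix (Fin 4) (Fin 4) ℝ := boostB (S 0 0) (S 1 0) (S 2 0) (S 3 0) d * S with hRdef
  have hBL := boostB_lorentz (S 0 0) (S 1 0) (S 2 0) (S 3 0) d hQ hd
  have hRL : Rᵀ * minkEta * R = minkEta := by
    rw [hRdef, Matrix.transpose_mul]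
    calc Sᵀ * (boostB (S 0 0) (S 1 0) (S 2 0) (S 3 0) d)ᵀ * minkEta * (boostB (S 0 0) (S 1 0) (S 2 0) (S 3 0) d * S)
        = Sᵀ * ((boostB (S 0 0) (S 1 0) (S 2 0) (S 3 0) d)ᵀ * minkEta * boostB (S 0 0) (S 1 0) (S 2 0) (S 3 0) d) * S := by simp only [Matrix.mul_assoc]
      _ = Sᵀ * minkEta * S := by rw [hBL]
      _ = minkEta := hL
  have hRL2 := lorentz_flip R hRL
  have hz00 : R 0 0 = 1 := by
    rw [hRdef]
    simp [boostB, Matrix.mul_apply, Fin.sum_univ_four, Matrix.vecHead, Matrix.vecTail]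
    linear_combination (1) * hQ
  have hz10 : R 1 0 = 0 := by
    rw [hRdef]
    simp [boostB, Matrix.mul_apply, Fin.sum_univ_four, Matrix.vecHead, Matrix.vecTail]
    linear_combination ((-1)*(S 1 0) + (S 0 0)*(S 1 0)) * hd + ((-1)*(S 1 0)*(d)) * hQ
  have hz20 : R 2 0 = 0 := by
    rw [hRdef]
    simp [boostB, Matrix.mul_apply, Fin.sum_univ_four, Matrix.vecHead, Matrix.vecTail]
    linear_combination ((-1)*(S 2 0) + (S 0 0)*(S 2 0)) * hd + ((-1)*(S 2 0)*(d)) * hQ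
  have hz30 : R 3 0 = 0 := by
    rw [hRdef]
    simp [boostB, Matrix.mul_apply, Fin.sum_univ_four, Matrix.vecHead, Matrix.vecTail]
    linear_combination ((-1)*(S 3 0) + (S 0 0)*(S 3 0)) * hd + ((-1)*(S 3 0)*(d)) * hQ
  have hz01 : R 0 1 = 0 := by
    have e := lorentz_entry R hRL 0 1
    rw [minkEta_eq] at e
    simp at e
    linear_combination e - (R 0 1) * hz00 + (R 1 1) * hz10 + (R 2 1) * hz20 + (R 3 1) * hz30
  have hz02 : R 0 2 = 0 := by
    have e := lorentz_entry R hRL 0 2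
    rw [minkEta_eq] at e
    simp at e
    linear_combination e - (R 0 2) * hz00 + (R 1 2) * hz10 + (R 2 2) * hz20 + (R 3 2) * hz30
  have hz03 : R 0 3 = 0 := by
    have e := lorentz_entry R hRL 0 3
    rw [minkEta_eq] at e
    simp at e
    linear_combination e - (R 0 3) * hz00 + (R 1 3) * hz10 + (R 2 3) * hz20 + (R 3 3) * hz30
  have hr11R : R 1 1*R 1 1 + R 1 2*R 1 2 + R 1 3*R 1 3 = 1 := by
    have e := lorentz_entry_row R hRL2 1 1
    rw [minkEta_eq] at e
    simp at e
    linear_combination (-1) * e + (R 1 0) * hz10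
  have hr12R : R 1 1*R 2 1 + R 1 2*R 2 2 + R 1 3*R 2 3 = 0 := by
    have e := lorentz_entry_row R hRL2 1 2
    rw [minkEta_eq] at e
    simp at e
    linear_combination (-1) * e + (R 1 0) * hz20
  have hr13R : R 1 1*R 3 1 + R 1 2*R 3 2 + R 1 3*R 3 3 = 0 := by
    have e := lorentz_entry_row R hRL2 1 3
    rw [minkEta_eq] at e
    simp at e
    linear_combination (-1) * e + (R 1 0) * hz30
  have hr22R : R 2 1*R 2 1 + R 2 2*R 2 2 + R 2 3*R 2 3 = 1 := by
    have e := lorentz_entry_row R hRL2 2 2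
    rw [minkEta_eq] at e
    simp at e
    linear_combination (-1) * e + (R 2 0) * hz20
  have hr23R : R 2 1*R 3 1 + R 2 2*R 3 2 + R 2 3*R 3 3 = 0 := by
    have e := lorentz_entry_row R hRL2 2 3
    rw [minkEta_eq] at e
    simp at e
    linear_combination (-1) * e + (R 2 0) * hz30
  have hr33R : R 3 1*R 3 1 + R 3 2*R 3 2 + R 3 3*R 3 3 = 1 := by
    have e := lorentz_entry_row R hRL2 3 3
    rw [minkEta_eq] at e
    simp at e
    linear_combination (-1) * e + (R 3 0) * hz30
  have hc11R : R 1 1*R 1 1 + R 2 1*R 2 1 + R 3 1*R 3 1 = 1 := by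
    have e := lorentz_entry R hRL 1 1
    rw [minkEta_eq] at e
    simp at e
    linear_combination (-1) * e + (R 0 1) * hz01
  have hc12R : R 1 1*R 1 2 + R 2 1*R 2 2 + R 3 1*R 3 2 = 0 := by
    have e := lorentz_entry R hRL 1 2
    rw [minkEta_eq] at e
    simp at e
    linear_combination (-1) * e + (R 0 1) * hz02
  have hc13R : R 1 1*R 1 3 + R 2 1*R 2 3 + R 3 1*R 3 3 = 0 := by
    have e := lorentz_entry R hRL 1 3
    rw [minkEta_eq] at e
    simp at e
    linear_combination (-1) * e + (R 0 1) * hz03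
  have hc22R : R 1 2*R 1 2 + R 2 2*R 2 2 + R 3 2*R 3 2 = 1 := by
    have e := lorentz_entry R hRL 2 2
    rw [minkEta_eq] at e
    simp at e
    linear_combination (-1) * e + (R 0 2) * hz02
  have hc23R : R 1 2*R 1 3 + R 2 2*R 2 3 + R 3 2*R 3 3 = 0 := by
    have e := lorentz_entry R hRL 2 3
    rw [minkEta_eq] at e
    simp at e
    linear_combination (-1) * e + (R 0 2) * hz03
  have hc33R : R 1 3*R 1 3 + R 2 3*R 2 3 + R 3 3*R 3 3 = 1 := by
    have e := lorentz_entry R hRL 3 3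
    rw [minkEta_eq] at e
    simp at e
    linear_combination (-1) * e + (R 0 3) * hz03
  have hRdet : R.det = 1 := by
    rw [hRdef, Matrix.det_mul, boostB_det (S 0 0) (S 1 0) (S 2 0) (S 3 0) d hQ hd, hdet, mul_one]
  have hdet4 := (det4 R).symm.trans hRdet
  have hd3R : R 1 1*(R 2 2*R 3 3 - R 2 3*R 3 2) + R 1 2*(-(R 2 1*R 3 3) + R 2 3*R 3 1) + R 1 3*(R 2 1*R 3 2 - R 2 2*R 3 1) = 1 := by
    linear_combination hdet4 - (R 1 1*(R 2 2*R 3 3 - R 2 3*R 3 2) - R 1 2*(R 2 1*R 3 3 - R 2 3*R 3 1) + R 1 3*(R 2 1*R 3 2 - R 2 2*R 3 1)) * hz00 + (R 1 0*(R 2 2*R 3 3 - R 2 3*R 3 2) - R 1 2*(R 2 0*R 3 3 - R 2 3*R 3 0) + R 1 3*(R 2 0*R 3 2 - R 2 2*R 3 0)) * hz01 - (R 1 0*(R 2 1*R 3 3 - R 2 3*R 3 1) - R 1 1*(R 2 0*R 3 3 - R 2 3*R 3 0) + R 1 3*(R 2 0*R 3 1 - R 2 1*R 3 0)) * hz02 +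 (R 1 0*(R 2 1*R 3 2 - R 2 2*R 3 1) - R 1 1*(R 2 0*R 3 2 - R 2 2*R 3 0) + R 1 2*(R 2 0*R 3 1 - R 2 1*R 3 0)) * hz03
  have ha11R : R 2 2*R 3 3 - R 2 3*R 3 2 = R 1 1 := by
    linear_combination ((R 2 3)*(R 3 2) + (-1)*(R 2 2)*(R 3 3)) * hr11R + ((-1)*(R 1 3)*(R 3 2) + (R 1 2)*(R 3 3)) * hr12R + ((R 1 3)*(R 2 2) + (-1)*(R 1 2)*(R 2 3)) * hr13R + ((R 1 1)) * hd3R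
  have ha12R : -(R 1 2*R 3 3) + R 1 3*R 3 2 = R 2 1 := by
    linear_combination ((R 2 3)*(R 3 2) + (-1)*(R 2 2)*(R 3 3)) * hr12R + ((-1)*(R 1 3)*(R 3 2) + (R 1 2)*(R 3 3)) * hr22R + ((R 1 3)*(R 2 2) + (-1)*(R 1 2)*(R 2 3)) * hr23R + ((R 2 1)) * hd3R
  have ha13R : R 1 2*R 2 3 - R 1 3*R 2 2 = R 3 1 := by
    linear_combination ((R 2 3)*(R 3 2) + (-1)*(R 2 2)*(R 3 3)) * hr13R + ((-1)*(R 1 3)*(R 3 2) + (R 1 2)*(R 3 3)) * hr23R + ((R 1 3)*(R 2 2) + (-1)*(R 1 2)*(R 2 3)) * hr33R + ((R 3 1)) * hd3R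
  have ha21R : -(R 2 1*R 3 3) + R 2 3*R 3 1 = R 1 2 := by
    linear_combination ((-1)*(R 2 3)*(R 3 1) + (R 2 1)*(R 3 3)) * hr11R + ((R 1 3)*(R 3 1) + (-1)*(R 1 1)*(R 3 3)) * hr12R + ((-1)*(R 1 3)*(R 2 1) + (R 1 1)*(R 2 3)) * hr13R + ((R 1 2)) * hd3R
  have ha22R : R 1 1*R 3 3 - R 1 3*R 3 1 = R 2 2 := by
    linear_combination ((-1)*(R 2 3)*(R 3 1) + (R 2 1)*(R 3 3)) * hr12R + ((R 1 3)*(R 3 1) + (-1)*(R 1 1)*(R 3 3)) * hr22R + ((-1)*(R 1 3)*(R 2 1) + (R 1 1)*(R 2 3)) * hr23R + ((R 2 2)) * hd3R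
  have ha23R : -(R 1 1*R 2 3) + R 1 3*R 2 1 = R 3 2 := by
    linear_combination ((-1)*(R 2 3)*(R 3 1) + (R 2 1)*(R 3 3)) * hr13R + ((R 1 3)*(R 3 1) + (-1)*(R 1 1)*(R 3 3)) * hr23R + ((-1)*(R 1 3)*(R 2 1) + (R 1 1)*(R 2 3)) * hr33R + ((R 3 2)) * hd3R
  have ha31R : R 2 1*R 3 2 - R 2 2*R 3 1 = R 1 3 := by
    linear_combination ((R 2 2)*(R 3 1) + (-1)*(R 2 1)*(R 3 2)) * hr11R + ((-1)*(R 1 2)*(R 3 1) + (R 1 1)*(R 3 2)) * hr12R + ((R 1 2)*(R 2 1) + (-1)*(R 1 1)*(R 2 2)) * hr13R + ((R 1 3)) * hd3R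
  have ha32R : -(R 1 1*R 3 2) + R 1 2*R 3 1 = R 2 3 := by
    linear_combination ((R 2 2)*(R 3 1) + (-1)*(R 2 1)*(R 3 2)) * hr12R + ((-1)*(R 1 2)*(R 3 1) + (R 1 1)*(R 3 2)) * hr22R + ((R 1 2)*(R 2 1) + (-1)*(R 1 1)*(R 2 2)) * hr23R + ((R 2 3)) * hd3R
  have ha33R : R 1 1*R 2 2 - R 1 2*R 2 1 = R 3 3 := by
    linear_combination ((R 2 2)*(R 3 1) + (-1)*(R 2 1)*(R 3 2)) * hr13R + ((-1)*(R 1 2)*(R 3 1) + (R 1 1)*(R 3 2)) * hr23R + ((R 1 2)*(R 2 1) + (-1)*(R 1 1)*(R 2 2)) * hr33R + ((R 3 3)) * hd3R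
  obtain ⟨Ur, hUr1, hUr2⟩ := rotFull (R 1 1) (R 1 2) (R 1 3) (R 2 1) (R 2 2) (R 2 3) (R 3 1) (R 3 2) (R 3 3)
    hr11R hr12R hr13R hr22R hr23R hr33R hc11R hc12R hc13R hc22R hc23R hc33R
    ha11R ha12R ha13R ha21R ha22R ha23R ha31R ha32R ha33R hd3R
  have hc2pos : (0:ℝ) < 2 + 2*S 0 0 := by linarith
  set cc : ℝ := Real.sqrt (2 + 2*S 0 0) with hccdef
  have hcsq : cc^2 = 2 + 2*S 0 0 := Real.sq_sqrt hc2pos.le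
  have hcpos : 0 < cc := Real.sqrt_pos.mpr hc2pos
  have hcC : ((cc:ℝ):ℂ)^2 = ((2 + 2*S 0 0 : ℝ) : ℂ) := by exact_mod_cast hcsq
  have hcne : ((cc:ℝ):ℂ) ≠ 0 := by simpa using Complex.ofReal_ne_zero.mpr hcpos.ne'
  have hscal : ((cc:ℝ):ℂ)⁻¹ * ((cc:ℝ):ℂ)⁻¹ * ((2 + 2*S 0 0 : ℝ):ℂ) = 1 := by
    rw [← hcC]; field_simp
  set VU : Matrix (Fin 2) (Fin 2) ℂ := ((cc:ℝ):ℂ)⁻¹ • boostP (S 0 0) (S 1 0) (S 2 0) (S 3 0) with hVU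
  set VD : Matrix (Fin 2) (Fin 2) ℂ := ((cc:ℝ):ℂ)⁻¹ • boostN (S 0 0) (S 1 0) (S 2 0) (S 3 0) with hVD
  have hVuVd : VU * VD = 1 := by
    rw [hVU, hVD, Matrix.smul_mul, Matrix.mul_smul,
      boostPN (S 0 0) (S 1 0) (S 2 0) (S 3 0) hQ, smul_smul, smul_smul, hscal, one_smul]
  have hVdH : VDᴴ = VD := by
    rw [hVD, Matrix.conjTranspose_smul, boostN_herm]
    congr 1
    simp
  have hdetVU : VU.det = 1 := by
    rw [hVU, Matrix.det_smul, boostP_det (S 0 0) (S 1 0) (S 2 0) (S 3 0) hQ, ← hcC]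
    rw [Fintype.card_fin]; field_simp
  have hNkey := boostB_key (S 0 0) (S 1 0) (S 2 0) (S 3 0) d hQ hd
  have hVdX : ∀ x : Fin 4 → ℝ, hMat ((boostB (S 0 0) (S 1 0) (S 2 0) (S 3 0) d).mulVec x) = VD * hMat x * VDᴴ := by
    intro x
    rw [hVdH, hVD, Matrix.smul_mul, Matrix.smul_mul, Matrix.mul_smul, smul_smul,
      ← hNkey x, smul_smul, hscal, one_smul]
  refine ⟨VU * Ur, ?_, ?_⟩
  · rw [Matrix.det_mul, hdetVU, hUr1, mul_one]
  · intro v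
    have h2vec : R.mulVec v = ![v 0, R 1 1 * v 1 + R 1 2 * v 2 + R 1 3 * v 3, R 2 1 * v 1 + R 2 2 * v 2 + R 2 3 * v 3, R 3 1 * v 1 + R 3 2 * v 2 + R 3 3 * v 3] := by
      funext k
      fin_cases k
      all_goals simp [Matrix.mulVec, dotProduct, Fin.sum_univ_four,
        hz00, hz01, hz02, hz03, hz10, hz20, hz30]
      all_goals ring
    have hstep : VD * hMat (S.mulVec v) * VDᴴ = Ur * hMat v * Urᴴ := by
      have h1 := hVdX (S.mulVec v)
      rw [Matrix.mulVec_mulVec] at h1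
      rw [← hRdef] at h1
      rw [h2vec] at h1
      rw [← h1, hUr2 v]
    calc hMat (S.mulVec v)
        = (VU * VD) * hMat (S.mulVec v) * (VDᴴ * VUᴴ) := by
          rw [show VDᴴ * VUᴴ = (VU * VD)ᴴ from (Matrix.conjTranspose_mul VU VD).symm, hVuVd]
          simp
      _ = VU * (VD * hMat (S.mulVec v) * VDᴴ) * VUᴴ := by simp only [Matrix.mul_assoc]
      _ = VU * (Ur * hMat v * Urᴴ) * VUᴴ := by rw [hstep]
      _ = (VU * Ur) * hMat v * (VU * Ur)ᴴ := by
          rw [Matrix.conjTranspose_mul]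
          simp only [Matrix.mul_assoc]
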